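/- Let A be a Noetherian integral domain of finite Krull dimension and let B be a nonzero commutative A-algebra which, as an A-module, is finitely generated and torsion-free. Then every associated prime of the B-module B is a minimal prime of B (so B has no embedded primes), and B is equidimensional: for every minimal prime 𝔮 of B the Krull dimension of B/𝔮 equals the Krull dimension of A; in particular the Krull dimension of B equals that of A. -/

import Mathlib

open Order

/-- Every element of a minimal prime is a zero divisor. -/
lemma aux_zd {B : Type*} [CommRing B] {q : Ideal B} (hq : q ∈ minimalPrimes B)
    {x : B} (hx : x ∈ q) : ∃ y : B, y ≠ 0 ∧ x * y = 0 := by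
  haveI hqp : q.IsPrime := hq.1.1
  have hnil : IsNilpotent (algebraMap B (Localization q.primeCompl) x) :=
    (haveI := Ring.KrullDimLE.of_isLocalization q hq (Localization q.primeCompl);
      Ring.KrullDimLE.isNilpotent_iff_mem_maximalIdeal).mpr
      ((IsLocalization.AtPrime.to_map_mem_maximal_iff (Localization q.primeCompl) q x).mpr hx)
  obtain ⟨n, hn⟩ := hnil
  have h0 : ∃ m : ℕ, ∃ s : q.primeCompl, (s : B) * x ^ m = 0 := by
    refine ⟨n, ?_⟩
    have hz : algebraMap B (Localization q.primeCompl) (x ^ n) = 0 := by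
      rw [map_pow]; exact hn
    exact (IsLocalization.map_eq_zero_iff q.primeCompl (Localization q.primeCompl) _).mp hz
  classical
  obtain ⟨s, hs⟩ := Nat.find_spec h0
  have hmne : Nat.find h0 ≠ 0 := by
    intro h
    rw [h, pow_zero, mul_one] at hs
    exact s.2 (hs ▸ q.zero_mem)
  refine ⟨(s : B) * x ^ (Nat.find h0 - 1), ?_, ?_⟩
  · intro h
    exact Nat.find_min h0 (Nat.sub_lt (Nat.pos_of_ne_zero hmne) one_pos) ⟨s, h⟩
  · calc x * ((s : B) * x ^ (Nat.find h0 - 1))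
        = (s : B) * x ^ (Nat.find h0 - 1 + 1) := by ring
      _ = 0 := by rw [Nat.sub_add_cancel (Nat.one_le_iff_ne_zero.mpr hmne)]; exact hs

/-- Krull dimension does not increase along integral extensions (incomparability). -/
lemma aux_le1 (A B : Type*) [CommRing A] [CommRing B] [Algebra A B]
    [Algebra.IsIntegral A B] : ringKrullDim B ≤ ringKrullDim A := by
  apply krullDim_le_of_strictMono
    (fun p : PrimeSpectrum B =>
      (⟨p.asIdeal.comap (algebraMap A B), Ideal.comap_isPrime _ _⟩ : PrimeSpectrum A))
  intro p q hpq
  rw [← PrimeSpectrum.asIdeal_lt_asIdeal] at hpq ⊢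
  obtain ⟨x, hxq, hxp⟩ := SetLike.exists_of_lt hpq
  exact Ideal.comap_lt_comap_of_integral_mem_sdiff hpq.le ⟨hxq, hxp⟩
    (Algebra.IsIntegral.isIntegral x)

/-- Krull dimension does not decrease along injective integral extensions (going up). -/
lemma aux_le2 (A B : Type*) [CommRing A] [Nontrivial A] [CommRing B] [Algebra A B]
    [Algebra.IsIntegral A B] (hinj : Function.Injective (algebraMap A B)) :
    ringKrullDim A ≤ ringKrullDim B := by
  have hker : RingHom.ker (algebraMap A B) = ⊥ :=
    (RingHom.injective_iff_ker_eq_bot _).mp hinj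
  haveI : Nontrivial B := ⟨⟨algebraMap A B 0, algebraMap A B 1,
    fun h => zero_ne_one (hinj h)⟩⟩
  have lift : ∀ n : ℕ, ∀ l : LTSeries (PrimeSpectrum A), l.length = n →
      ∃ L : LTSeries (PrimeSpectrum B), L.length = l.length ∧
        L.last.asIdeal.comap (algebraMap A B) = l.last.asIdeal := by
    intro n
    induction n with
    | zero =>
      intro l hl
      haveI := l.last.isPrime
      obtain ⟨Q, _, hQprime, hQcomap⟩ :=
        Ideal.exists_ideal_over_prime_of_isIntegral l.last.asIdeal (⊥ : Ideal B)
          (by rw [← RingHom.ker_eq_comap_bot, hker]; exact bot_le)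
      exact ⟨(RelSeries.singleton _ (⟨Q, hQprime⟩ : PrimeSpectrum B) : LTSeries (PrimeSpectrum B)),
        by simp [hl], hQcomap⟩
    | succ n ih =>
      intro l hl
      obtain ⟨L, hLlen, hLlast⟩ := ih l.eraseLast (by simp [hl])
      have hrel : l.eraseLast.last < l.last :=
        l.eraseLast_last_rel_last (by omega)
      haveI := l.last.isPrime
      obtain ⟨Q, hQge, hQprime, hQcomap⟩ :=
        Ideal.exists_ideal_over_prime_of_isIntegral l.last.asIdeal L.last.asIdeal
          (by rw [hLlast]
              exact ((PrimeSpectrum.asIdeal_lt_asIdeal _ _).mpr hrel).le)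
      have hlt : L.last < (⟨Q, hQprime⟩ : PrimeSpectrum B) := by
        rw [← PrimeSpectrum.asIdeal_lt_asIdeal]
        refine lt_of_le_of_ne hQge ?_
        intro h
        have heq : l.eraseLast.last.asIdeal = l.last.asIdeal := by
          rw [← hLlast, h, hQcomap]
        exact ne_of_lt ((PrimeSpectrum.asIdeal_lt_asIdeal _ _).mpr hrel) heq
      refine ⟨L.snoc _ hlt, ?_, ?_⟩
      · have := L.eraseLast_length
        simp only [RelSeries.snoc_length, hLlen, RelSeries.eraseLast_length, hl]
        omega
      · rw [RelSeries.last_snoc]; exact hQcomap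
  rw [ringKrullDim, ringKrullDim, krullDim_eq_iSup_length, krullDim_eq_iSup_length,
    WithBot.coe_le_coe]
  refine iSup_le fun l => ?_
  obtain ⟨L, hLl, -⟩ := lift l.length l rfl
  exact le_iSup_of_le L (by exact_mod_cast hLl.ge)

/-- Let `A` be a Noetherian integral domain of finite Krull dimension and
`B` a nonzero commutative `A`-algebra, finitely generated and torsion-free as an `A`-module.
Then every associated prime of the `B`-module `B` is a minimal prime (no embedded primes),
and `B` is equidimensional: each quotient by a minimal prime has Krull dimension equal to
that of `A`; in particular `dim B = dim A`. -/
theorem stmt_1 (A B : Type*) [CommRing A] [IsDomain A] [IsNoetherianRing A]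
    (hA : ringKrullDim A < ⊤)
    [CommRing B] [Nontrivial B] [Algebra A B] [Module.Finite A B]
    (htf : ∀ a : A, a ≠ 0 → ∀ x : B, a • x = 0 → x = 0) :
    (∀ 𝔭 ∈ associatedPrimes B B, 𝔭 ∈ minimalPrimes B) ∧
    (∀ 𝔮 ∈ minimalPrimes B, ringKrullDim (B ⧸ 𝔮) = ringKrullDim A) ∧
    ringKrullDim B = ringKrullDim A := by
  haveI : Algebra.IsIntegral A B := Algebra.IsIntegral.of_finite A B
  have hinj : Function.Injective (algebraMap A B) := by
    rw [injective_iff_map_eq_zero]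
    intro a ha
    by_contra hane
    have h1 : a • (1 : B) = 0 := by rw [Algebra.smul_def, mul_one]; exact ha
    exact one_ne_zero (htf a hane 1 h1)
  -- comap of any minimal prime is ⊥
  have hcom : ∀ q ∈ minimalPrimes B, q.comap (algebraMap A B) = ⊥ := by
    intro q hq
    refine le_antisymm ?_ bot_le
    intro a ha
    rw [Ideal.mem_comap] at ha
    by_contra hane
    have hane' : a ≠ 0 := by simpa using hane
    obtain ⟨y, hy0, hxy⟩ := aux_zd hq ha
    refine hy0 (htf a hane' y ?_)
    rw [Algebra.smul_def]; exact hxy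
  refine ⟨?_, ?_, ?_⟩
  · -- associated primes are minimal
    rintro 𝔭 ⟨h𝔭prime, x, hx⟩
    -- x ≠ 0
    have hxne : x ≠ 0 := by
      rintro rfl
      refine h𝔭prime.ne_top ?_
      rw [hx, Ideal.eq_top_iff_one]
      exact Ideal.le_radical (Submodule.mem_colon_singleton.mpr (by simp))
    -- comap 𝔭 = ⊥
    have h𝔭com : 𝔭.comap (algebraMap A B) = ⊥ := by
      refine le_antisymm ?_ bot_le
      intro a ha
      rw [Ideal.mem_comap, hx] at ha
      obtain ⟨n, hn⟩ := ha
      by_contra hane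
      have hane' : a ^ n ≠ 0 := pow_ne_zero _ (by simpa using hane)
      have hax : algebraMap A B (a ^ n) * x = 0 := by
        have := Submodule.mem_colon_singleton.mp hn
        simpa [smul_eq_mul] using this
      exact hxne (htf _ hane' x (by rw [Algebra.smul_def]; exact hax))
    haveI := h𝔭prime
    obtain ⟨q, hqmin, hq𝔭⟩ := Ideal.exists_minimalPrimes_le (bot_le (a := 𝔭))
    have hqmin' : q ∈ minimalPrimes B := hqmin
    haveI : q.IsPrime := hqmin'.1.1
    have : q = 𝔭 := by
      by_contra hne
      have hlt : q < 𝔭 := lt_of_le_of_ne hq𝔭 hne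
      obtain ⟨z, hz𝔭, hzq⟩ := SetLike.exists_of_lt hlt
      have := Ideal.comap_lt_comap_of_integral_mem_sdiff (R := A) hq𝔭 ⟨hz𝔭, hzq⟩
        (Algebra.IsIntegral.isIntegral z)
      rw [h𝔭com] at this
      exact not_lt_bot this
    rw [← this]; exact hqmin'
  · -- equidimensionality
    intro 𝔮 h𝔮
    haveI h𝔮p : 𝔮.IsPrime := h𝔮.1.1
    haveI : Module.Finite A (B ⧸ 𝔮) :=
      Module.Finite.of_surjective (IsScalarTower.toAlgHom A B (B ⧸ 𝔮)).toLinearMap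
        Ideal.Quotient.mk_surjective
    haveI : Algebra.IsIntegral A (B ⧸ 𝔮) := Algebra.IsIntegral.of_finite A (B ⧸ 𝔮)
    have hinjq : Function.Injective (algebraMap A (B ⧸ 𝔮)) := by
      rw [injective_iff_map_eq_zero]
      intro a ha
      rw [IsScalarTower.algebraMap_apply A B (B ⧸ 𝔮), Ideal.Quotient.algebraMap_eq,
        Ideal.Quotient.eq_zero_iff_mem] at ha
      have : a ∈ 𝔮.comap (algebraMap A B) := ha
      rw [hcom 𝔮 h𝔮] at this
      simpa using this
    exact le_antisymm (aux_le1 A (B ⧸ 𝔮)) (aux_le2 A (B ⧸ 𝔮) hinjq)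
  · exact le_antisymm (aux_le1 A B) (aux_le2 A B hinj)
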